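/- Let Γ be a group and θ : Γ → Sym(Ω) a group homomorphism such that the induced action of Γ on Ω is transitive. Let α ∈ Ω and let M = {g ∈ Γ | θ(g)(α) = α} be the stabilizer of α in Γ. Then the centralizer of the image θ(Γ) in Sym(Ω) is isomorphic, as a group, to N_Γ(M)/M, the quotient of the normalizer of M in Γ by M. -/

import Mathlib

/-- If `θ : Γ → Sym(Ω)` gives a transitive action on `Ω` and `M` is the
stabilizer of `α` in `Γ`, then the centralizer of `θ(Γ)` in `Sym(Ω)` is isomorphic to
`N_Γ(M)/M`. -/
theorem centralizer_image_iso_normalizer_quotient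
    {Ω : Type*} {Γ : Type*} [Group Γ] (θ : Γ →* Equiv.Perm Ω)
    (htrans : ∀ ω₁ ω₂ : Ω, ∃ g : Γ, θ g ω₁ = ω₂)
    (α : Ω) (M : Subgroup Γ) (hM : M = Subgroup.comap θ (MulAction.stabilizer (Equiv.Perm Ω) α)) :
    Nonempty (Subgroup.centralizer ((θ.range : Subgroup (Equiv.Perm Ω)) : Set (Equiv.Perm Ω))
      ≃* (Subgroup.normalizer (M : Set Γ) ⧸ M.subgroupOf (Subgroup.normalizer (M : Set Γ)))) := by
  have hmem : ∀ g : Γ, g ∈ M ↔ θ g α = α := by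
    intro g
    rw [hM, Subgroup.mem_comap, MulAction.mem_stabilizer_iff]
    rfl
  choose rep hrep using fun ω => htrans α ω
  -- key well-definedness lemma
  have key : ∀ n : (Subgroup.normalizer (M : Set Γ)), ∀ g g' : Γ, θ g α = θ g' α →
      θ (g * (n : Γ)⁻¹) α = θ (g' * (n : Γ)⁻¹) α := by
    intro n g g' h
    have h1 : g'⁻¹ * g ∈ M := by
      rw [hmem, map_mul, map_inv]
      simp [h]
    have hn' : (n : Γ)⁻¹ ∈ (Subgroup.normalizer (M : Set Γ)) := inv_mem n.2
    have h2 : (n : Γ) * (g'⁻¹ * g) * (n : Γ)⁻¹ ∈ M :=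
      (Subgroup.mem_normalizer_iff.mp n.2 _).mp h1
    rw [hmem] at h2
    have : θ (g' * (n : Γ)⁻¹)⁻¹ (θ (g * (n : Γ)⁻¹) α) = α := by
      rw [← Equiv.Perm.mul_apply, ← map_mul]
      have e : (g' * (n : Γ)⁻¹)⁻¹ * (g * (n : Γ)⁻¹) = (n : Γ) * (g'⁻¹ * g) * (n : Γ)⁻¹ := by
        group
      rw [e]; exact h2
    calc θ (g * (n : Γ)⁻¹) α
        = θ (g' * (n : Γ)⁻¹) (θ (g' * (n : Γ)⁻¹)⁻¹ (θ (g * (n : Γ)⁻¹) α)) := by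
          rw [← Equiv.Perm.mul_apply, ← map_mul, mul_inv_cancel, map_one, Equiv.Perm.one_apply]
      _ = θ (g' * (n : Γ)⁻¹) α := by rw [this]
  set F : (Subgroup.normalizer (M : Set Γ)) → Ω → Ω := fun n ω => θ (rep ω * (n : Γ)⁻¹) α with hFdef
  have hF : ∀ n : (Subgroup.normalizer (M : Set Γ)), ∀ g : Γ, F n (θ g α) = θ (g * (n : Γ)⁻¹) α := by
    intro n g
    exact key n (rep (θ g α)) g (hrep _)
  have hFinv : ∀ n : (Subgroup.normalizer (M : Set Γ)), Function.LeftInverse (F n⁻¹) (F n) := by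
    intro n ω
    have h1 : F n ω = θ (rep ω * (n : Γ)⁻¹) α := rfl
    rw [h1, hF n⁻¹ (rep ω * (n : Γ)⁻¹)]
    have : rep ω * (n : Γ)⁻¹ * ((n⁻¹ : (Subgroup.normalizer (M : Set Γ))) : Γ)⁻¹ = rep ω := by
      simp
    rw [this, hrep]
  set ψfun : (Subgroup.normalizer (M : Set Γ)) → Equiv.Perm Ω := fun n =>
    { toFun := F n, invFun := F n⁻¹, left_inv := hFinv n,
      right_inv := by have h := hFinv n⁻¹; simp only [inv_inv] at h; exact h } with hψdef
  have hψapp : ∀ n : (Subgroup.normalizer (M : Set Γ)), ∀ g : Γ, ψfun n (θ g α) = θ (g * (n : Γ)⁻¹) α :=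
    fun n g => hF n g
  have hψmul : ∀ n m : (Subgroup.normalizer (M : Set Γ)), ψfun (n * m) = ψfun n * ψfun m := by
    intro n m
    ext ω
    have hω : ω = θ (rep ω) α := (hrep ω).symm
    rw [Equiv.Perm.mul_apply]
    conv_lhs => rw [hω]
    conv_rhs => rw [hω]
    rw [hψapp, hψapp, hψapp]
    congr 1
    push_cast
    group
  set ψ : (Subgroup.normalizer (M : Set Γ)) →* Equiv.Perm Ω := MonoidHom.mk' ψfun hψmul with hψ
  -- the image lies in the centralizer
  have hcent : ∀ n : (Subgroup.normalizer (M : Set Γ)), ψ n ∈ Subgroup.centralizer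
      ((θ.range : Subgroup (Equiv.Perm Ω)) : Set (Equiv.Perm Ω)) := by
    intro n
    rw [Subgroup.mem_centralizer_iff]
    rintro - ⟨h, rfl⟩
    ext ω
    have hω : ω = θ (rep ω) α := (hrep ω).symm
    rw [Equiv.Perm.mul_apply, Equiv.Perm.mul_apply]
    conv_lhs => rw [hω]
    conv_rhs => rw [hω]
    show θ h (ψfun n (θ (rep ω) α)) = ψfun n (θ h (θ (rep ω) α))
    rw [hψapp, show θ h (θ (rep ω) α) = θ (h * rep ω) α by rw [map_mul]; rfl, hψapp,
      ← Equiv.Perm.mul_apply, ← map_mul, ← mul_assoc]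
  set φ : (Subgroup.normalizer (M : Set Γ)) →* Subgroup.centralizer
      ((θ.range : Subgroup (Equiv.Perm Ω)) : Set (Equiv.Perm Ω)) :=
    ψ.codRestrict _ hcent with hφ
  have hker : φ.ker = M.subgroupOf (Subgroup.normalizer (M : Set Γ)) := by
    ext n
    rw [MonoidHom.mem_ker, Subgroup.mem_subgroupOf]
    constructor
    · intro h
      have h1 : ψ n = 1 := congrArg Subtype.val h
      have h2 : ψfun n (θ 1 α) = θ (1 * (n : Γ)⁻¹) α := hψapp n 1
      rw [show (ψfun n = ψ n) from rfl, h1] at h2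
      simp only [map_one, Equiv.Perm.one_apply, one_mul] at h2
      have : (n : Γ)⁻¹ ∈ M := by rw [hmem, ← h2]
      simpa using inv_mem this
    · intro h
      have hinv : θ (n : Γ)⁻¹ α = α := by
        have := (hmem _).mp (inv_mem h)
        simpa using this
      apply Subtype.ext
      show ψ n = 1
      ext ω
      have hω : ω = θ (rep ω) α := (hrep ω).symm
      conv_lhs => rw [hω]
      show ψfun n (θ (rep ω) α) = ω
      rw [hψapp, map_mul, Equiv.Perm.mul_apply, map_inv, ← map_inv, hinv, hrep]
  have hsurj : Function.Surjective φ := by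
    rintro ⟨f, hf⟩
    rw [Subgroup.mem_centralizer_iff] at hf
    have hcomm : ∀ g : Γ, ∀ ω : Ω, θ g (f ω) = f (θ g ω) := by
      intro g ω
      have := hf (θ g) ⟨g, rfl⟩
      calc θ g (f ω) = (θ g * f) ω := rfl
        _ = (f * θ g) ω := by rw [this]
        _ = f (θ g ω) := rfl
    obtain ⟨n, hn⟩ := htrans α (f α)
    have hfinv : f⁻¹ α = θ n⁻¹ α := by
      have : f (θ n⁻¹ α) = α := by
        rw [← hcomm n⁻¹ α]
        rw [map_inv]
        rw [← hn]
        simp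
      calc f⁻¹ α = f⁻¹ (f (θ n⁻¹ α)) := by rw [this]
        _ = θ n⁻¹ α := by simp
    have hnN : n⁻¹ ∈ (Subgroup.normalizer (M : Set Γ)) := by
      rw [Subgroup.mem_normalizer_iff]
      intro h
      constructor
      · intro hh
        rw [hmem]
        have hhα : θ h α = α := (hmem h).mp hh
        calc θ (n⁻¹ * h * n⁻¹⁻¹) α = θ n⁻¹ (θ h (θ n α)) := by
              simp [map_mul, Equiv.Perm.mul_apply]
          _ = θ n⁻¹ (θ h (f α)) := by rw [hn]
          _ = θ n⁻¹ (f (θ h α)) := by rw [hcomm]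
          _ = θ n⁻¹ (f α) := by rw [hhα]
          _ = θ n⁻¹ (θ n α) := by rw [hn]
          _ = α := by rw [← Equiv.Perm.mul_apply, ← map_mul]; simp
      · intro hh
        rw [hmem] at hh ⊢
        have hcomm' : ∀ g : Γ, θ g (f⁻¹ α) = f⁻¹ (θ g α) := by
          intro g
          have := hcomm g (f⁻¹ α)
          calc θ g (f⁻¹ α) = f⁻¹ (f (θ g (f⁻¹ α))) := by simp
            _ = f⁻¹ (θ g (f (f⁻¹ α))) := by rw [hcomm]
            _ = f⁻¹ (θ g α) := by simp
        have : θ h α = θ n (θ (n⁻¹ * h * n⁻¹⁻¹) (θ n⁻¹ α)) := by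
          rw [← Equiv.Perm.mul_apply, ← Equiv.Perm.mul_apply, ← map_mul, ← map_mul]
          congr 1
          group
        rw [this, ← hfinv, hcomm', hh, hfinv, ← Equiv.Perm.mul_apply, ← map_mul]
        simp
    refine ⟨⟨n⁻¹, hnN⟩, ?_⟩
    apply Subtype.ext
    show ψ ⟨n⁻¹, hnN⟩ = f
    ext ω
    have hω : ω = θ (rep ω) α := (hrep ω).symm
    conv_lhs => rw [hω]
    conv_rhs => rw [hω]
    show ψfun _ (θ (rep ω) α) = f (θ (rep ω) α)
    rw [hψapp, ← hcomm]
    simp only [inv_inv]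
    rw [← hn, ← Equiv.Perm.mul_apply, ← map_mul]
  have e := QuotientGroup.quotientKerEquivOfSurjective φ hsurj
  exact ⟨e.symm.trans (QuotientGroup.quotientMulEquivOfEq hker)⟩
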